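/- arXiv:0804.0526 — 2 statements merged into one kernel-verified Lean document; each statement's English description precedes it below -/
import Mathlib

section
/- On ℓ²(M), where M is the free monoid on two generators a, b, the operators R_a and R_b satisfy: R_a*R_a = R_b*R_b = 1, R_a*R_b = R_b*R_a = 0, and R_aR_a* + R_bR_b* = 1 − p_e, where p_e is the rank-one orthogonal projection onto the span of δ_e (e the empty word). Moreover, the C*-subalgebra of B(ℓ²(M)) generated by R_a and R_b contains every compact operator on ℓ²(M). -/
noncomputable section

/-- The free monoid on two generators `a`, `b`. -/
abbrev M2 : Type := FreeMonoid (Fin 2)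

abbrev l2M : Type := lp (fun _ : M2 => ℂ) 2

instance : DecidableEq M2 := Classical.decEq _

/-- The standard basis vector δ_w of ℓ²(M). -/
def δ (w : M2) : l2M := lp.single 2 w 1

open ContinuousLinearMap
open scoped InnerProductSpace

lemma inner_delta_left (w : M2) (f : l2M) : ⟪δ w, f⟫_ℂ = f w := by
  simp [δ, lp.inner_single_left]

lemma delta_apply (w v : M2) : (δ w : ∀ _ : M2, ℂ) v = if v = w then 1 else 0 := by
  simp [δ, lp.single_apply, Pi.single_apply]

lemma inner_delta_delta (u v : M2) : ⟪δ u, δ v⟫_ℂ = if u = v then 1 else 0 := by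
  rw [inner_delta_left, delta_apply]

lemma hasSum_delta (f : l2M) : HasSum (fun w => f w • δ w) f := by
  have := lp.hasSum_single (E := fun _ : M2 => ℂ) ENNReal.ofNat_ne_top f
  convert this using 2 with w
  rw [δ, ← lp.single_smul]
  norm_num

lemma ext_delta {T S : l2M →L[ℂ] l2M} (h : ∀ w, T (δ w) = S (δ w)) : T = S := by
  apply ContinuousLinearMap.ext
  intro f
  have h1 := (hasSum_delta f).mapL T
  have h2 := (hasSum_delta f).mapL S
  simp only [map_smul] at h1 h2
  simp only [h] at h1
  exact h1.unique h2

lemma eq_of_coords {x y : l2M} (h : ∀ w, x w = y w) : x = y := by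
  ext w; exact h w

lemma mul_of_inj {u w : M2} {i j : Fin 2} :
    u * FreeMonoid.of i = w * FreeMonoid.of j ↔ u = w ∧ i = j := by
  constructor
  · intro h
    have h' : FreeMonoid.toList u ++ [i] = FreeMonoid.toList w ++ [j] := h
    have h1 := List.append_inj' h' rfl
    exact ⟨FreeMonoid.toList.injective (by exact h1.1), by simpa using h1.2⟩
  · rintro ⟨rfl, rfl⟩; rfl

lemma one_ne_mul_of (u : M2) (i : Fin 2) : (1 : M2) ≠ u * FreeMonoid.of i := by
  intro h
  have h' : ([] : List (Fin 2)) = FreeMonoid.toList u ++ [i] := congrArg FreeMonoid.toList h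
  simpa using congrArg List.length h'

lemma cases_rev (w : M2) : w = 1 ∨ ∃ u : M2, ∃ i : Fin 2, w = u * FreeMonoid.of i := by
  rcases List.eq_nil_or_concat' (FreeMonoid.toList w) with h | ⟨l, b, h⟩
  · left; exact FreeMonoid.toList.injective h
  · right
    exact ⟨FreeMonoid.ofList l, b, FreeMonoid.toList.injective h⟩

lemma adjoint_coord (T : l2M →L[ℂ] l2M) (v u : M2) :
    (adjoint T (δ v)) u = ⟪T (δ u), δ v⟫_ℂ := by
  rw [← inner_delta_left u, ContinuousLinearMap.adjoint_inner_right]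

section R
variable {R : l2M →L[ℂ] l2M} {i : Fin 2} (hR : ∀ w, R (δ w) = δ (w * FreeMonoid.of i))
include hR

lemma adjR_append (w : M2) (j : Fin 2) :
    adjoint R (δ (w * FreeMonoid.of j)) = if i = j then δ w else 0 := by
  apply eq_of_coords
  intro u
  rw [adjoint_coord, hR, inner_delta_delta]
  by_cases hij : i = j
  · subst hij
    simp only [if_pos rfl, mul_of_inj, delta_apply]
    by_cases h : u = w <;> simp [h, delta_apply]
  · rw [if_neg (by rw [mul_of_inj]; tauto), if_neg hij]
    rfl

lemma adjR_one : adjoint R (δ 1) = 0 := by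
  apply eq_of_coords
  intro u
  rw [adjoint_coord, hR, inner_delta_delta,
    if_neg (fun h => one_ne_mul_of u i h.symm)]
  rfl

end R

def Eop (u v : M2) : l2M →L[ℂ] l2M := (innerSL ℂ (δ v)).smulRight (δ u)

lemma Eop_apply (u v : M2) (x : l2M) : Eop u v x = ⟪δ v, x⟫_ℂ • δ u := rfl

set_option linter.unusedSectionVars false
section parts
variable {Ra Rb : l2M →L[ℂ] l2M}
  (hRa : ∀ w : M2, Ra (δ w) = δ (w * FreeMonoid.of 0))
  (hRb : ∀ w : M2, Rb (δ w) = δ (w * FreeMonoid.of 1))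
include hRa hRb

lemma part1 : adjoint Ra * Ra = 1 := by
  apply ext_delta; intro w
  rw [ContinuousLinearMap.mul_apply, hRa, adjR_append hRa, if_pos rfl,
    ContinuousLinearMap.one_apply]

lemma part2 : adjoint Rb * Rb = 1 := by
  apply ext_delta; intro w
  rw [ContinuousLinearMap.mul_apply, hRb, adjR_append hRb, if_pos rfl,
    ContinuousLinearMap.one_apply]

lemma part3 : adjoint Ra * Rb = 0 := by
  apply ext_delta; intro w
  rw [ContinuousLinearMap.mul_apply, hRb, adjR_append hRa,
    if_neg (by decide), ContinuousLinearMap.zero_apply]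

lemma part4 : adjoint Rb * Ra = 0 := by
  apply ext_delta; intro w
  rw [ContinuousLinearMap.mul_apply, hRa, adjR_append hRb,
    if_neg (by decide), ContinuousLinearMap.zero_apply]

lemma part5 : Ra * adjoint Ra + Rb * adjoint Rb = 1 - Eop 1 1 := by
  apply ext_delta; intro w
  simp only [ContinuousLinearMap.add_apply, ContinuousLinearMap.mul_apply,
    ContinuousLinearMap.sub_apply, ContinuousLinearMap.one_apply, Eop_apply]
  rcases cases_rev w with rfl | ⟨u, i, rfl⟩
  · rw [adjR_one hRa, adjR_one hRb, inner_delta_delta, if_pos rfl]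
    simp
  · rw [adjR_append hRa, adjR_append hRb, inner_delta_delta,
      if_neg (one_ne_mul_of u i)]
    fin_cases i
    · rw [if_pos (by decide), if_neg (by decide)]
      simp [hRa]
    · rw [if_neg (by decide), if_pos (by decide)]
      simp [hRb]

end parts

section alg
variable (Ra Rb : l2M →L[ℂ] l2M)

/-- Operator implementing right multiplication by `w`. -/
def Rw (w : M2) : l2M →L[ℂ] l2M :=
  (((FreeMonoid.toList w).reverse.map (fun i : Fin 2 => if i = 0 then Ra else Rb))).prod

lemma Rw_one : Rw Ra Rb 1 = 1 := rfl

lemma Rw_snoc (u : M2) (i : Fin 2) :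
    Rw Ra Rb (u * FreeMonoid.of i) = (if i = 0 then Ra else Rb) * Rw Ra Rb u := by
  simp [Rw, FreeMonoid.toList_mul, FreeMonoid.toList_of]

variable {Ra Rb}
variable (hRa : ∀ w : M2, Ra (δ w) = δ (w * FreeMonoid.of 0))
  (hRb : ∀ w : M2, Rb (δ w) = δ (w * FreeMonoid.of 1))
include hRa hRb

lemma Rw_delta_list (l : List (Fin 2)) (v : M2) :
    Rw Ra Rb (FreeMonoid.ofList l) (δ v) = δ (v * FreeMonoid.ofList l) := by
  induction l using List.reverseRecOn with
  | nil =>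
      rw [show FreeMonoid.ofList ([] : List (Fin 2)) = 1 from rfl, Rw_one, mul_one,
        ContinuousLinearMap.one_apply]
  | append_singleton l i ih =>
      rw [FreeMonoid.ofList_append, FreeMonoid.ofList_singleton, Rw_snoc,
        ContinuousLinearMap.mul_apply, ih, ← mul_assoc]
      fin_cases i
      · rw [if_pos (by decide)]; exact hRa _
      · rw [if_neg (by decide)]; exact hRb _

lemma Rw_delta (w v : M2) : Rw Ra Rb w (δ v) = δ (v * w) := by
  have := Rw_delta_list hRa hRb (FreeMonoid.toList w) v
  rwa [FreeMonoid.ofList_toList] at this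

omit hRa hRb in
lemma Rw_mem_list (l : List (Fin 2)) :
    Rw Ra Rb (FreeMonoid.ofList l) ∈ StarAlgebra.adjoin ℂ {Ra, Rb} := by
  induction l using List.reverseRecOn with
  | nil =>
      rw [show FreeMonoid.ofList ([] : List (Fin 2)) = 1 from rfl, Rw_one]
      exact one_mem _
  | append_singleton l i ih =>
      rw [FreeMonoid.ofList_append, FreeMonoid.ofList_singleton, Rw_snoc]
      refine mul_mem ?_ ih
      fin_cases i
      · rw [if_pos (by decide)]; exact StarAlgebra.subset_adjoin ℂ _ (by simp)
      · rw [if_neg (by decide)]; exact StarAlgebra.subset_adjoin ℂ _ (by simp)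

omit hRa hRb in
lemma Rw_mem (w : M2) : Rw Ra Rb w ∈ StarAlgebra.adjoin ℂ {Ra, Rb} := by
  have := Rw_mem_list (Ra := Ra) (Rb := Rb) (FreeMonoid.toList w)
  rwa [FreeMonoid.ofList_toList] at this

lemma Eop_one_one_mem : Eop 1 1 ∈ StarAlgebra.adjoin ℂ {Ra, Rb} := by
  have h : Eop 1 1 = 1 - (Ra * adjoint Ra + Rb * adjoint Rb) := by
    rw [part5 hRa hRb, sub_sub_cancel]
  rw [h, ← ContinuousLinearMap.star_eq_adjoint, ← ContinuousLinearMap.star_eq_adjoint]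
  have ha : Ra ∈ StarAlgebra.adjoin ℂ {Ra, Rb} := StarAlgebra.subset_adjoin ℂ _ (by simp)
  have hb : Rb ∈ StarAlgebra.adjoin ℂ {Ra, Rb} := StarAlgebra.subset_adjoin ℂ _ (by simp)
  exact sub_mem (one_mem _) (add_mem (mul_mem ha (star_mem ha)) (mul_mem hb (star_mem hb)))

lemma Eop_factor (u v : M2) :
    Eop u v = Rw Ra Rb u * Eop 1 1 * adjoint (Rw Ra Rb v) := by
  apply ContinuousLinearMap.ext; intro x
  simp only [ContinuousLinearMap.mul_apply, Eop_apply, map_smul]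
  rw [ContinuousLinearMap.adjoint_inner_right, Rw_delta hRa hRb, Rw_delta hRa hRb, one_mul, one_mul]

lemma Eop_mem (u v : M2) : Eop u v ∈ StarAlgebra.adjoin ℂ {Ra, Rb} := by
  rw [Eop_factor hRa hRb, ← ContinuousLinearMap.star_eq_adjoint]
  exact mul_mem (mul_mem (Rw_mem (Ra := Ra) (Rb := Rb) u) (Eop_one_one_mem hRa hRb))
    (star_mem (Rw_mem (Ra := Ra) (Rb := Rb) v))

end alg

lemma adjoint_Eop (u v : M2) : adjoint (Eop u v) = Eop v u := by
  symm
  rw [ContinuousLinearMap.eq_adjoint_iff]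
  intro x y
  simp only [Eop_apply, inner_smul_left, inner_smul_right, inner_conj_symm]
  ring

lemma Eop_mul_Eop (u v u' v' : M2) :
    Eop u v * Eop u' v' = (if v = u' then (1:ℂ) else 0) • Eop u v' := by
  apply ContinuousLinearMap.ext; intro x
  simp only [ContinuousLinearMap.mul_apply, ContinuousLinearMap.smul_apply, Eop_apply, map_smul,
    inner_delta_delta]
  rw [smul_comm]

lemma P_idem (s : Finset M2) :
    (∑ w ∈ s, Eop w w) * (∑ w ∈ s, Eop w w) = ∑ w ∈ s, Eop w w := by
  rw [Finset.sum_mul_sum]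
  refine Finset.sum_congr rfl fun w hw => ?_
  simp only [Eop_mul_Eop, ite_smul, one_smul, zero_smul, Finset.sum_ite_eq, if_pos hw]

lemma P_selfadj (s : Finset M2) :
    adjoint (∑ w ∈ s, Eop w w) = ∑ w ∈ s, Eop w w := by
  rw [map_sum]
  exact Finset.sum_congr rfl fun w _ => adjoint_Eop w w

lemma P_norm_le (s : Finset M2) (x : l2M) : ‖(∑ w ∈ s, Eop w w) x‖ ≤ ‖x‖ := by
  set P : l2M →L[ℂ] l2M := ∑ w ∈ s, Eop w w with hP
  have h1 : ⟪P x, P x⟫_ℂ = ⟪x, P x⟫_ℂ := by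
    conv_lhs => rw [show P x = adjoint P x by rw [P_selfadj]]
    rw [ContinuousLinearMap.adjoint_inner_left, hP, P_selfadj,
      show (∑ w ∈ s, Eop w w) ((∑ w ∈ s, Eop w w) x)
        = ((∑ w ∈ s, Eop w w) * (∑ w ∈ s, Eop w w)) x from rfl, P_idem]
  have h2 : ‖P x‖ ^ 2 ≤ ‖x‖ * ‖P x‖ := by
    have e1 : (‖P x‖ : ℝ) ^ 2 = Complex.re ⟪P x, P x⟫_ℂ := by
      rw [← inner_self_eq_norm_sq (𝕜 := ℂ)]; rfl
    rw [e1, h1]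
    calc Complex.re ⟪x, P x⟫_ℂ ≤ ‖⟪x, P x⟫_ℂ‖ := Complex.re_le_norm _
      _ = ‖⟪x, P x⟫_ℂ‖ := rfl
      _ ≤ ‖x‖ * ‖P x‖ := norm_inner_le_norm _ _
  rcases eq_or_lt_of_le (norm_nonneg (P x)) with h | h
  · rw [← h]; exact norm_nonneg x
  · nlinarith

lemma P_apply (s : Finset M2) (x : l2M) :
    (∑ w ∈ s, Eop w w) x = ∑ w ∈ s, x w • δ w := by
  simp [Eop_apply, inner_delta_left]

lemma innerSL_sum_smulRight (s : Finset M2) (c : M2 → ℂ) (u : M2) :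
    (innerSL ℂ (∑ v ∈ s, c v • δ v)).smulRight (δ u)
      = ∑ v ∈ s, (starRingEnd ℂ (c v)) • Eop u v := by
  apply ContinuousLinearMap.ext; intro x
  simp [Eop_apply, sum_inner, inner_smul_left, Finset.sum_smul, smul_smul]

lemma Eop_mul_K (w : M2) (K : l2M →L[ℂ] l2M) :
    Eop w w * K = (innerSL ℂ (adjoint K (δ w))).smulRight (δ w) := by
  apply ContinuousLinearMap.ext; intro x
  show Eop w w (K x) = ⟪adjoint K (δ w), x⟫_ℂ • δ w
  rw [ContinuousLinearMap.adjoint_inner_left, Eop_apply]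

section closure
variable {Ra Rb : l2M →L[ℂ] l2M}
  (hRa : ∀ w : M2, Ra (δ w) = δ (w * FreeMonoid.of 0))
  (hRb : ∀ w : M2, Rb (δ w) = δ (w * FreeMonoid.of 1))
include hRa hRb

lemma rank_one_mem (u : M2) (y : l2M) :
    (innerSL ℂ y).smulRight (δ u) ∈ (StarAlgebra.adjoin ℂ {Ra, Rb}).topologicalClosure := by
  have hcont : Continuous fun z : l2M => (innerSL ℂ z).smulRight (δ u) := by
    have heq : (fun z : l2M => (innerSL ℂ z).smulRight (δ u)) =
        fun z => ((ContinuousLinearMap.smulRightL ℂ l2M l2M).flip (δ u)) ((innerSL ℂ) z) := rfl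
    rw [heq]
    exact (((ContinuousLinearMap.smulRightL ℂ l2M l2M).flip (δ u)).continuous).comp
      (innerSL ℂ).continuous
  have hsum : Filter.Tendsto (fun s : Finset M2 => ∑ v ∈ s, y v • δ v)
      Filter.atTop (nhds y) := hasSum_delta y
  have htend := ((hcont.tendsto y).comp hsum)
  have hmem : ∀ s : Finset M2,
      (innerSL ℂ (∑ v ∈ s, y v • δ v)).smulRight (δ u)
        ∈ (StarAlgebra.adjoin ℂ {Ra, Rb} : Set (l2M →L[ℂ] l2M)) := by
    intro s
    rw [innerSL_sum_smulRight]
    exact sum_mem fun v _ => SMulMemClass.smul_mem _ (Eop_mem hRa hRb u v)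
  have : (innerSL ℂ y).smulRight (δ u)
      ∈ closure (StarAlgebra.adjoin ℂ {Ra, Rb} : Set (l2M →L[ℂ] l2M)) :=
    mem_closure_of_tendsto htend (Filter.Eventually.of_forall hmem)
  rwa [← StarSubalgebra.topologicalClosure_coe, SetLike.mem_coe] at this

end closure


set_option maxHeartbeats 1000000 in
open ContinuousLinearMap in
/-- On `ℓ²(M)`, `M` the free monoid on `a`, `b`, the right-append operators satisfy
`R_a* R_a = R_b* R_b = 1`, `R_a* R_b = R_b* R_a = 0` and
`R_a R_a* + R_b R_b* = 1 − p_e`, with `p_e` the rank-one projection onto the span of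
`δ_e`; moreover the C*-subalgebra generated by `R_a, R_b` contains every compact
operator on `ℓ²(M)`. -/
theorem stmt12 (Ra Rb : l2M →L[ℂ] l2M)
    (hRa : ∀ w : M2, Ra (δ w) = δ (w * FreeMonoid.of 0))
    (hRb : ∀ w : M2, Rb (δ w) = δ (w * FreeMonoid.of 1)) :
    adjoint Ra * Ra = 1 ∧ adjoint Rb * Rb = 1 ∧
    adjoint Ra * Rb = 0 ∧ adjoint Rb * Ra = 0 ∧
    Ra * adjoint Ra + Rb * adjoint Rb = 1 - (innerSL ℂ (δ 1)).smulRight (δ 1) ∧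
    ∀ K : l2M →L[ℂ] l2M, IsCompactOperator K →
      K ∈ (StarAlgebra.adjoin ℂ {Ra, Rb}).topologicalClosure := by
  refine ⟨part1 hRa hRb, part2 hRa hRb, part3 hRa hRb, part4 hRa hRb, part5 hRa hRb, ?_⟩
  intro K hK
  set B := (StarAlgebra.adjoin ℂ {Ra, Rb}).topologicalClosure with hB
  rw [← SetLike.mem_coe]
  have hclosed : IsClosed (B : Set (l2M →L[ℂ] l2M)) :=
    StarSubalgebra.isClosed_topologicalClosure _
  rw [← hclosed.closure_eq, Metric.mem_closure_iff]
  intro ε hε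
  -- total boundedness of the image of the unit ball
  have hcomp : IsCompact (closure (⇑K '' Metric.ball 0 1)) := by
    have := IsCompactOperator.isCompact_closure_image_ball (𝕜₁ := ℂ)
      (f := (K : l2M →ₗ[ℂ] l2M)) (by exact hK) 1
    simpa using this
  have htb : TotallyBounded (⇑K '' Metric.ball 0 1) :=
    (hcomp.totallyBounded).subset subset_closure
  obtain ⟨t, htfin, hcov⟩ := Metric.totallyBounded_iff.mp htb (ε/8) (by positivity)
  -- truncation finsets
  have hchoice : ∀ c : l2M, ∃ s₀ : Finset M2, ∀ s : Finset M2, s₀ ≤ s →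
      ‖(∑ v ∈ s, c v • δ v) - c‖ < ε/8 := by
    intro c
    have h' := Metric.tendsto_atTop.mp (hasSum_delta c) (ε/8) (by positivity)
    obtain ⟨s₀, hs₀⟩ := h'
    exact ⟨s₀, fun s hs => by simpa [dist_eq_norm] using hs₀ s hs⟩
  choose g hg using hchoice
  obtain ⟨S, hgS⟩ : ∃ S : Finset M2, ∀ c ∈ t, g c ≤ S :=
    ⟨htfin.toFinset.sup g, fun c hc => Finset.le_sup (htfin.mem_toFinset.mpr hc)⟩
  set P : l2M →L[ℂ] l2M := ∑ w ∈ S, Eop w w with hPdef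
  refine ⟨P * K, ?_, ?_⟩
  · -- membership
    have : P * K = ∑ w ∈ S, (Eop w w * K) := by rw [hPdef, Finset.sum_mul]
    rw [SetLike.mem_coe, this]
    refine sum_mem fun w _ => ?_
    rw [Eop_mul_K]
    exact rank_one_mem hRa hRb w (adjoint K (δ w))
  · -- distance bound
    rw [dist_eq_norm]
    have key : ∀ y : l2M, ‖y‖ < 1 → ‖K y - P (K y)‖ ≤ 3 * (ε/8) := by
      intro y hy
      have hyim : K y ∈ ⋃ c ∈ t, Metric.ball c (ε/8) :=
        hcov (Set.mem_image_of_mem _ (mem_ball_zero_iff.mpr hy))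
      obtain ⟨c, hct, hcball⟩ := Set.mem_iUnion₂.mp hyim
      have h1 : ‖K y - c‖ < ε/8 := by
        simpa [dist_eq_norm] using hcball
      have hgc : g c ≤ S := hgS c hct
      have h2 : ‖c - P c‖ < ε/8 := by
        rw [hPdef, P_apply, ← norm_sub_rev]
        exact hg c S hgc
      have h3 : ‖P c - P (K y)‖ ≤ ε/8 := by
        rw [← map_sub]
        calc ‖P (c - K y)‖ ≤ ‖c - K y‖ := P_norm_le S _
          _ = ‖K y - c‖ := norm_sub_rev _ _
          _ ≤ ε/8 := le_of_lt h1
      calc ‖K y - P (K y)‖ = ‖(K y - c) + (c - P c) + (P c - P (K y))‖ := by abel_nf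
        _ ≤ ‖K y - c‖ + ‖c - P c‖ + ‖P c - P (K y)‖ := norm_add₃_le
        _ ≤ 3 * (ε/8) := by linarith
    have hbound : ‖K - P * K‖ ≤ 3 * (ε/4) := by
      refine ContinuousLinearMap.opNorm_le_bound _ (by positivity) fun x => ?_
      by_cases hx : x = 0
      · simp [hx]
      · have hxn : (0:ℝ) < ‖x‖ := norm_pos_iff.mpr hx
        set y : l2M := (((2*‖x‖)⁻¹ : ℝ) : ℂ) • x with hy
        have hyn : ‖y‖ < 1 := by
          rw [hy, norm_smul, Complex.norm_real, Real.norm_of_nonneg (by positivity)]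
          rw [inv_mul_eq_div, div_lt_one (by positivity)]
          linarith
        have hxy : x = (((2*‖x‖ : ℝ)) : ℂ) • y := by
          rw [hy, smul_smul, ← Complex.ofReal_mul, mul_inv_cancel₀ (by positivity), 
            Complex.ofReal_one, one_smul]
        have := key y hyn
        have heval : (K - P * K) x = (((2*‖x‖ : ℝ)) : ℂ) • (K y - P (K y)) := by
          conv_lhs => rw [hxy]
          rw [map_smul]
          congr 1
        rw [heval, norm_smul, Complex.norm_real, Real.norm_of_nonneg (by positivity)]
        calc 2 * ‖x‖ * ‖K y - P (K y)‖ ≤ 2 * ‖x‖ * (3 * (ε/8)) := by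
              apply mul_le_mul_of_nonneg_left this (by positivity)
          _ = 3 * (ε/4) * ‖x‖ := by ring
    calc ‖K - P * K‖ ≤ 3 * (ε/4) := hbound
      _ < ε := by linarith
end
end

section
/- The family of operators (R_u R_v*)_{(u,v) ∈ M×M} on ℓ²(M), indexed by pairs of words u, v in the free monoid M on two generators, is linearly independent in B(ℓ²(M)): any finite linear combination ∑ λ_{u,v} R_u R_v* that equals the zero operator has all coefficients λ_{u,v} = 0. -/
noncomputable section

lemma δ_apply (w x : M2) : (δ w) x = if x = w then 1 else 0 := by
  rw [δ, lp.single_apply]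
  split_ifs with h
  · subst h; exact Pi.single_eq_same _ _
  · exact Pi.single_eq_of_ne h _

lemma inner_δ (x : M2) (f : l2M) : (inner ℂ (δ x) f : ℂ) = f x := by
  rw [δ, lp.inner_single_left]
  simp [RCLike.inner_apply]

open ContinuousLinearMap in
lemma adj_δ_mul (R : M2 → (l2M →L[ℂ] l2M))
    (hR : ∀ u w : M2, R u (δ w) = δ (w * u)) (v c : M2) :
    adjoint (R v) (δ (c * v)) = δ c := by
  apply lp.ext
  funext z
  rw [← inner_δ z ((ContinuousLinearMap.adjoint (R v)) (δ (c * v))), adjoint_inner_right, hR,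
    inner_δ, δ_apply, δ_apply]
  by_cases h : z = c
  · subst h; simp
  · rw [if_neg h, if_neg (fun hzv => h (mul_right_cancel hzv))]

open ContinuousLinearMap in
lemma adj_δ_zero (R : M2 → (l2M →L[ℂ] l2M))
    (hR : ∀ u w : M2, R u (δ w) = δ (w * u)) (v w : M2)
    (h : ¬ ∃ c, w = c * v) :
    adjoint (R v) (δ w) = 0 := by
  apply lp.ext
  funext z
  rw [← inner_δ z ((ContinuousLinearMap.adjoint (R v)) (δ w)), adjoint_inner_right, hR,
    inner_δ, δ_apply, if_neg (fun hzv => h ⟨z, hzv.symm⟩)]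
  rfl

open ContinuousLinearMap in
open Classical in
lemma entry (R : M2 → (l2M →L[ℂ] l2M))
    (hR : ∀ u w : M2, R u (δ w) = δ (w * u)) (u v x w : M2) :
    (inner ℂ (δ x) ((R u * adjoint (R v)) (δ w)) : ℂ)
      = if ∃ c, w = c * v ∧ x = c * u then 1 else 0 := by
  rw [ContinuousLinearMap.mul_apply]
  by_cases hv : ∃ c, w = c * v
  · obtain ⟨c, rfl⟩ := hv
    rw [adj_δ_mul R hR, hR, inner_δ, δ_apply]
    by_cases hx : x = c * u
    · rw [if_pos hx, if_pos ⟨c, rfl, hx⟩]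
    · rw [if_neg hx, if_neg]
      rintro ⟨c', hc', hx'⟩
      exact hx (by rw [hx', mul_right_cancel hc'])
  · rw [adj_δ_zero R hR v w hv, map_zero, inner_zero_right, if_neg]
    rintro ⟨c, hc, -⟩
    exact hv ⟨c, hc⟩

open ContinuousLinearMap in
/-- The family of operators `(R_u R_v*)` on `ℓ²(M)`, indexed by pairs of words
`(u, v) ∈ M × M`, is linearly independent in `B(ℓ²(M))`. -/
theorem stmt13 (R : M2 → (l2M →L[ℂ] l2M))
    (hR : ∀ u w : M2, R u (δ w) = δ (w * u)) :
    LinearIndependent ℂ (fun p : M2 × M2 => R p.1 * adjoint (R p.2)) := by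
  classical
  rw [linearIndependent_iff']
  intro s g hsum p hp
  suffices H : ∀ n, ∀ q ∈ s, q.1.length + q.2.length = n → g q = 0 by
    exact H _ p hp rfl
  intro n
  induction n using Nat.strong_induction_on with
  | _ n ih =>
    intro q hq hlen
    have h0 : (inner ℂ (δ q.1) ((∑ r ∈ s, g r • (R r.1 * adjoint (R r.2))) (δ q.2)) : ℂ) = 0 := by
      rw [hsum]; simp
    rw [sum_apply, inner_sum] at h0
    simp only [coe_smul', Pi.smul_apply, inner_smul_right] at h0
    have key : ∀ r ∈ s, g r * (inner ℂ (δ q.1) ((R r.1 * adjoint (R r.2)) (δ q.2)) : ℂ)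
        = if r = q then g q else 0 := by
      intro r hr
      rw [entry R hR]
      by_cases hcond : ∃ c, q.2 = c * r.2 ∧ q.1 = c * r.1
      · obtain ⟨c, h2, h1⟩ := hcond
        by_cases hc : c = 1
        · subst hc
          rw [one_mul] at h1 h2
          have : r = q := Prod.ext h1.symm h2.symm
          subst this
          simp [h1, h2]
        · have hgr : g r = 0 := by
            refine ih (r.1.length + r.2.length) ?_ r hr rfl
            have hcl : 0 < c.length := Nat.pos_of_ne_zero (fun h => hc (FreeMonoid.length_eq_zero.mp h))
            have e1 : q.1.length = c.length + r.1.length := by rw [h1, FreeMonoid.length_mul]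
            have e2 : q.2.length = c.length + r.2.length := by rw [h2, FreeMonoid.length_mul]
            omega
          have hne : r ≠ q := by
            rintro rfl
            have hcl : 0 < c.length :=
              Nat.pos_of_ne_zero (fun h => hc (FreeMonoid.length_eq_zero.mp h))
            have := congrArg FreeMonoid.length h1
            rw [FreeMonoid.length_mul] at this
            omega
          rw [hgr, zero_mul, if_neg hne]
      · rw [if_neg hcond, mul_zero, if_neg]
        rintro rfl
        exact hcond ⟨1, (one_mul _).symm, (one_mul _).symm⟩
    rw [Finset.sum_congr rfl key, Finset.sum_ite_eq' s q (fun _ => g q), if_pos hq] at h0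
    exact h0
end
end
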